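/- For all r ≥ 2, k ≥ 2 and 1 ≤ ℓ ≤ k-1: R̂_r(P^{(k,ℓ)}_{2k-ℓ}) = r + 1, where P^{(k,ℓ)}_{2k-ℓ} is the (k,ℓ)-path with exactly two edges. -/

import Mathlib

open Finset

/-- A `k`-uniform hypergraph, given by its (finite) edge set; vertices are natural numbers. -/
def IsUniform (k : ℕ) (G : Finset (Finset ℕ)) : Prop :=
  ∀ e ∈ G, e.card = k

/-- The vertex set of a hypergraph. -/
def hVerts (G : Finset (Finset ℕ)) : Finset ℕ := G.biUnion id

/-- `G` contains a copy of `H`, i.e. a subgraph isomorphic to `H`. -/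
def IsCopy (H G : Finset (Finset ℕ)) : Prop :=
  ∃ f : ℕ → ℕ, Set.InjOn f ↑(hVerts H) ∧ ∀ e ∈ H, e.image f ∈ G

/-- `G →_r H`: every `r`-coloring of the edges of `G` yields a monochromatic copy of `H`. -/
def Arrows (r : ℕ) (G H : Finset (Finset ℕ)) : Prop :=
  ∀ χ : Finset ℕ → Fin r, ∃ c : Fin r, IsCopy H (G.filter fun e => χ e = c)

/-- The `r`-color size-Ramsey number of `H`: the minimum number of edges of a
`k`-uniform hypergraph `G` with `G →_r H`. -/
noncomputable def sizeRamsey (k r : ℕ) (H : Finset (Finset ℕ)) : ℕ :=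
  sInf {m | ∃ G : Finset (Finset ℕ), IsUniform k G ∧ Arrows r G H ∧ G.card = m}

/-- The `r`-color Ramsey number of `H`: the minimum number of vertices of a
`k`-uniform hypergraph `G` with `G →_r H`. -/
noncomputable def vertexRamsey (k r : ℕ) (H : Finset (Finset ℕ)) : ℕ :=
  sInf {m | ∃ G : Finset (Finset ℕ), IsUniform k G ∧ Arrows r G H ∧ (hVerts G).card = m}

/-- The `(k,ℓ)`-path with `m` edges: edge `i` (for `0 ≤ i < m`) is
`{i(k-ℓ), i(k-ℓ)+1, …, i(k-ℓ)+k-1}`. -/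
def pathWithEdges (k l m : ℕ) : Finset (Finset ℕ) :=
  (Finset.range m).image fun i => (Finset.range k).image fun j => i * (k - l) + j

/-- The `(k,ℓ)`-path on `n` vertices, `P_n^{(k,ℓ)}`; it has `(n-ℓ)/(k-ℓ)` edges. -/
def hPath (k l n : ℕ) : Finset (Finset ℕ) :=
  pathWithEdges k l ((n - l) / (k - l))



lemma image_add_range (c n : ℕ) :
    (Finset.range n).image (fun j => c + j) = Finset.Ico c (c + n) := by
  ext x
  simp only [Finset.mem_image, Finset.mem_range, Finset.mem_Ico]
  constructor
  · rintro ⟨j, hj, rfl⟩; omega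
  · intro h; exact ⟨x - c, by omega, by omega⟩

lemma mul_cancel_aux {i i' d : ℕ} (hd : 1 ≤ d) (h1 : i' * d ≤ i * d)
    (h2 : i * d < i' * d + d) : i = i' := by
  rcases lt_trichotomy i i' with h | h | h
  · have := Nat.mul_le_mul_right d (Nat.succ_le_of_lt h)
    rw [Nat.succ_mul] at this
    omega
  · exact h
  · have := Nat.mul_le_mul_right d (Nat.succ_le_of_lt h)
    rw [Nat.succ_mul] at this
    omega

theorem stmt15 (k r l : ℕ) (hk : 2 ≤ k) (hr : 2 ≤ r) (hl1 : 1 ≤ l) (hl2 : l ≤ k - 1) :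
    sizeRamsey k r (hPath k l (2 * k - l)) = r + 1 := by
  set d := k - l with hd_def
  have hd : 1 ≤ d := by omega
  have hlk : l + d = k := by omega
  -- identify H
  have hH : hPath k l (2 * k - l) = {Finset.range k, Finset.Ico d (d + k)} := by
    unfold hPath pathWithEdges
    have h2 : (2 * k - l - l) / (k - l) = 2 := by
      have : 2 * k - l - l = 2 * d := by omega
      rw [this, ← hd_def]
      exact Nat.mul_div_cancel 2 (by omega)
    rw [h2, show Finset.range 2 = {0, 1} by decide, Finset.image_insert,
      Finset.image_singleton]
    congr 1
    · simp only [Nat.zero_mul, Nat.zero_add, Finset.image_id']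
    · rw [Nat.one_mul, ← hd_def, image_add_range]
  have hV : hVerts ({Finset.range k, Finset.Ico d (d + k)} : Finset (Finset ℕ)) =
      Finset.range (d + k) := by
    unfold hVerts
    rw [Finset.biUnion_insert, Finset.singleton_biUnion]
    ext x
    simp only [id, Finset.mem_union, Finset.mem_range, Finset.mem_Ico]
    omega
  rw [hH]
  unfold sizeRamsey
  -- lower bound: any arrowing graph has at least r+1 edges
  have lower : ∀ G : Finset (Finset ℕ),
      Arrows r G {Finset.range k, Finset.Ico d (d + k)} → r + 1 ≤ G.card := by
    intro G hG
    by_contra hcard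
    push_neg at hcard
    have hle : G.card ≤ r := by omega
    classical
    set χ : Finset ℕ → Fin r := fun e =>
      if h : e ∈ G then Fin.castLE hle (G.equivFin ⟨e, h⟩) else ⟨0, by omega⟩ with hχ
    obtain ⟨c, f, hinj, hmaps⟩ := hG χ
    rw [hV] at hinj
    have he0 : (Finset.range k).image f ∈ G.filter fun e => χ e = c :=
      hmaps _ (Finset.mem_insert_self _ _)
    have he1 : (Finset.Ico d (d + k)).image f ∈ G.filter fun e => χ e = c :=
      hmaps _ (Finset.mem_insert_of_mem (Finset.mem_singleton_self _))
    -- the two images are distinct edges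
    have hne : (Finset.range k).image f ≠ (Finset.Ico d (d + k)).image f := by
      intro heq
      have h0 : f 0 ∈ (Finset.Ico d (d + k)).image f := by
        rw [← heq]
        exact Finset.mem_image_of_mem f (Finset.mem_range.mpr (by omega))
      obtain ⟨x, hx, hfx⟩ := Finset.mem_image.mp h0
      rw [Finset.mem_Ico] at hx
      have : x = 0 := hinj (by simp only [Finset.coe_range, Set.mem_Iio]; omega)
        (by simp only [Finset.coe_range, Set.mem_Iio]; omega) hfx
      omega
    -- but each color class has at most one edge
    have hone : (G.filter fun e => χ e = c).card ≤ 1 := by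
      rw [Finset.card_le_one]
      intro a ha b hb
      rw [Finset.mem_filter] at ha hb
      obtain ⟨haG, hac⟩ := ha
      obtain ⟨hbG, hbc⟩ := hb
      rw [hχ] at hac hbc
      simp only [dif_pos haG] at hac
      simp only [dif_pos hbG] at hbc
      have := Fin.castLE_injective hle (hac.trans hbc.symm)
      have := G.equivFin.injective this
      exact Subtype.mk_eq_mk.mp this
    have : 1 < (G.filter fun e => χ e = c).card :=
      Finset.one_lt_card.mpr ⟨_, he0, _, he1, hne⟩
    omega
  -- upper bound: the sunflower with r+1 petals arrows H
  have upper : (r + 1) ∈ {m | ∃ G : Finset (Finset ℕ), IsUniform k G ∧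
      Arrows r G {Finset.range k, Finset.Ico d (d + k)} ∧ G.card = m} := by
    classical
    set edge : ℕ → Finset ℕ :=
      fun i => Finset.range l ∪ Finset.Ico (l + i * d) (l + i * d + d) with hedge
    have hmem_edge : ∀ i x, x ∈ edge i ↔ x < l ∨ (l + i * d ≤ x ∧ x < l + i * d + d) := by
      intro i x
      simp [hedge, Finset.mem_union, Finset.mem_range, Finset.mem_Ico]
    have hedge_inj : ∀ i i', edge i = edge i' → i = i' := by
      intro i i' h
      have h1 : (l + i * d) ∈ edge i := by rw [hmem_edge]; omega
      rw [h, hmem_edge] at h1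
      exact mul_cancel_aux hd (by omega) (by omega)
    refine ⟨(Finset.range (r + 1)).image edge, ?_, ?_, ?_⟩
    · intro e he
      obtain ⟨i, _, rfl⟩ := Finset.mem_image.mp he
      rw [hedge]
      rw [Finset.card_union_of_disjoint, Finset.card_range, Nat.card_Ico]
      · omega
      · rw [Finset.disjoint_left]
        intro a ha hb
        rw [Finset.mem_range] at ha
        rw [Finset.mem_Ico] at hb
        omega
    · intro χ
      have hpig := Finset.exists_ne_map_eq_of_card_lt_of_maps_to
        (s := Finset.range (r + 1)) (t := (Finset.univ : Finset (Fin r)))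
        (f := fun i => χ (edge i))
        (by rw [Finset.card_univ, Fintype.card_fin, Finset.card_range]; omega)
        (fun a _ => Finset.mem_univ _)
      obtain ⟨i, hi, i', hi', hii', heq⟩ := hpig
      set A := i * d with hA
      set B := i' * d with hB
      have hAB : A + d ≤ B ∨ B + d ≤ A := by
        rcases lt_or_gt_of_ne hii' with h | h
        · left
          have := Nat.mul_le_mul_right d (Nat.succ_le_of_lt h)
          rw [Nat.succ_mul, ← hA, ← hB] at this; omega
        · right
          have := Nat.mul_le_mul_right d (Nat.succ_le_of_lt h)
          rw [Nat.succ_mul, ← hA, ← hB] at this; omega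
      set F : ℕ → ℕ := fun v => if v < d then l + A + v else if v < k then v - d
        else l + B + (v - k) with hF
      have himg0 : (Finset.range k).image F = edge i := by
        ext x
        rw [hmem_edge, ← hA]
        simp only [Finset.mem_image, Finset.mem_range, hF]
        constructor
        · rintro ⟨j, hj, rfl⟩
          split_ifs <;> omega
        · rintro (hx | hx)
          · exact ⟨x + d, by omega, by rw [if_neg (by omega), if_pos (by omega)]; omega⟩
          · exact ⟨x - (l + A), by omega, by rw [if_pos (by omega)]; omega⟩
      have himg1 : (Finset.Ico d (d + k)).image F = edge i' := by
        ext x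
        rw [hmem_edge, ← hB]
        simp only [Finset.mem_image, Finset.mem_Ico, hF]
        constructor
        · rintro ⟨j, hj, rfl⟩
          split_ifs <;> omega
        · rintro (hx | hx)
          · exact ⟨x + d, by omega, by rw [if_neg (by omega), if_pos (by omega)]; omega⟩
          · exact ⟨k + (x - (l + B)), by omega,
              by rw [if_neg (by omega), if_neg (by omega)]; omega⟩
      refine ⟨χ (edge i), F, ?_, ?_⟩
      · rw [hV]
        intro a ha b hb hab
        simp only [Finset.coe_range, Set.mem_Iio] at ha hb
        rw [hF] at hab
        dsimp only at hab
        split_ifs at hab <;> omega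
      · intro e he
        rw [Finset.mem_insert, Finset.mem_singleton] at he
        rw [Finset.mem_filter]
        rcases he with rfl | rfl
        · rw [himg0]; exact ⟨Finset.mem_image_of_mem edge hi, rfl⟩
        · rw [himg1]; exact ⟨Finset.mem_image_of_mem edge hi', heq.symm⟩
    · rw [Finset.card_image_of_injOn fun i _ i' _ h => hedge_inj i i' h,
        Finset.card_range]
  exact le_antisymm (Nat.sInf_le upper) (le_csInf ⟨_, upper⟩ (by
    rintro m ⟨G, _, hGar, rfl⟩
    exact lower G hGar))
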